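/- Let k₀ ≥ 1, μ ≥ 0, r ≥ 0, m = 2k₀ + μ, n = m + r. Let K₀ ∈ ℝ^{μ×μ} be symmetric invertible, let K̃ ∈ ℝ^{m×m} have block form (blocks of sizes k₀, μ, k₀): [[0, 0, I_{k₀}],[0, K₀, 0],[I_{k₀}, 0, 0]], let D ∈ ℝ^{r×r} be diagonal with each diagonal entry equal to 1 or −1, and let K = diag(K̃, D) ∈ ℝ^{n×n}. Suppose N is a maximal abelian Lie subalgebra of o(K̃) all of whose elements are nilpotent matrices, and suppose the common kernel ∩_{X∈N} ker X equals span{e_1,…,e_{k₀}} ⊆ ℝ^m. Let W = span{e_1,…,e_{k₀}} + span{e_{m+1},…,e_n} ⊆ ℝ^n. Then M = {E(diag(X, 0_r), α) : X ∈ N, α ∈ W} is a maximal abelian subalgebra of e(K). -/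
import Mathlib


open Matrix

/-- `o(K)`: real matrices `X` with `XK + KXᵀ = 0`. -/
def oK {ι : Type*} [Fintype ι] (K : Matrix ι ι ℝ) : Set (Matrix ι ι ℝ) :=
  {X | X * K + K * Xᵀ = 0}

/-- The extended matrix `E(X, a)` with block form `[[X, a], [0, 0]]`. -/
def Emat {ι : Type*} (X : Matrix ι ι ℝ) (a : ι → ℝ) :
    Matrix (ι ⊕ Unit) (ι ⊕ Unit) ℝ :=
  Matrix.fromBlocks X (Matrix.of fun i _ => a i) 0 0

/-- The Lie algebra `e(K)`, as a set of extended matrices. -/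
def eK {ι : Type*} [Fintype ι] (K : Matrix ι ι ℝ) :
    Set (Matrix (ι ⊕ Unit) (ι ⊕ Unit) ℝ) :=
  {m | ∃ X ∈ oK K, ∃ a : ι → ℝ, m = Emat X a}

/-- `M` is a maximal abelian subalgebra of the matrix Lie algebra (set) `L`:
it is a linear subspace contained in `L`, its elements pairwise commute, and
every element of `L` commuting with all of `M` belongs to `M`. -/
def IsMASA {κ : Type*} [Fintype κ] (L M : Set (Matrix κ κ ℝ)) : Prop :=
  M ⊆ L ∧
  (∀ X ∈ M, ∀ Y ∈ M, X * Y = Y * X) ∧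
  (0 : Matrix κ κ ℝ) ∈ M ∧
  (∀ X ∈ M, ∀ Y ∈ M, X + Y ∈ M) ∧
  (∀ (c : ℝ), ∀ X ∈ M, c • X ∈ M) ∧
  (∀ Y ∈ L, (∀ X ∈ M, Y * X = X * Y) → Y ∈ M)

/-- Index type with blocks of sizes `k₀, μ, k₀`. -/
abbrev Idx7 (k₀ μ : ℕ) := Fin k₀ ⊕ Fin μ ⊕ Fin k₀

/-- The metric `K̃ = [[0,0,I],[0,K₀,0],[I,0,0]]` with blocks of sizes `k₀, μ, k₀`. -/
def Ktil (k₀ μ : ℕ) (K₀ : Matrix (Fin μ) (Fin μ) ℝ) :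
    Matrix (Idx7 k₀ μ) (Idx7 k₀ μ) ℝ :=
  Matrix.of fun i j =>
    match i, j with
    | Sum.inl a, Sum.inr (Sum.inr b) => if a = b then 1 else 0
    | Sum.inr (Sum.inr a), Sum.inl b => if a = b then 1 else 0
    | Sum.inr (Sum.inl a), Sum.inr (Sum.inl b) => K₀ a b
    | _, _ => 0

set_option linter.unusedSectionVars false

section Aux
variable {ι κ : Type*} [Fintype ι] [Fintype κ]

lemma Emat_mul (A B : Matrix ι ι ℝ) (a b : ι → ℝ) :
    Emat A a * Emat B b = Emat (A * B) (A.mulVec b) := by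
  ext i j
  cases i <;> cases j <;>
    simp [Emat, Matrix.fromBlocks, Matrix.mul_apply, Matrix.mulVec, dotProduct,
      Fintype.sum_sum_type]

lemma Emat_inj {A B : Matrix ι ι ℝ} {a b : ι → ℝ} (h : Emat A a = Emat B b) :
    A = B ∧ a = b := by
  constructor
  · ext i j; have := congrFun (congrFun h (Sum.inl i)) (Sum.inl j)
    simpa [Emat, Matrix.fromBlocks] using this
  · funext i; have := congrFun (congrFun h (Sum.inl i)) (Sum.inr ())
    simpa [Emat, Matrix.fromBlocks] using this

lemma Emat_add (A B : Matrix ι ι ℝ) (a b : ι → ℝ) :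
    Emat A a + Emat B b = Emat (A + B) (a + b) := by
  ext i j; cases i <;> cases j <;> simp [Emat, Matrix.fromBlocks]

lemma Emat_smul (c : ℝ) (A : Matrix ι ι ℝ) (a : ι → ℝ) :
    c • Emat A a = Emat (c • A) (c • a) := by
  ext i j; cases i <;> cases j <;> simp [Emat, Matrix.fromBlocks]

lemma Emat_zero : Emat (0 : Matrix ι ι ℝ) (0 : ι → ℝ) = 0 := by
  ext i j; cases i <;> cases j <;> simp [Emat, Matrix.fromBlocks]

lemma dg_mul (X Y : Matrix ι ι ℝ) :
    (Matrix.fromBlocks X 0 0 0 : Matrix (ι ⊕ κ) (ι ⊕ κ) ℝ) * Matrix.fromBlocks Y 0 0 0 =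
      Matrix.fromBlocks (X * Y) 0 0 0 := by
  simp [Matrix.fromBlocks_multiply]

lemma dg_mulVec (X : Matrix ι ι ℝ) (v : ι ⊕ κ → ℝ) :
    (Matrix.fromBlocks X 0 0 0 : Matrix (ι ⊕ κ) (ι ⊕ κ) ℝ).mulVec v =
      Sum.elim (X.mulVec (v ∘ Sum.inl)) 0 := by
  funext i
  cases i <;>
    simp [Matrix.mulVec, dotProduct, Matrix.fromBlocks, Fintype.sum_sum_type, Function.comp]

lemma dg_add (X Y : Matrix ι ι ℝ) :
    (Matrix.fromBlocks X 0 0 0 : Matrix (ι ⊕ κ) (ι ⊕ κ) ℝ) + Matrix.fromBlocks Y 0 0 0 =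
      Matrix.fromBlocks (X + Y) 0 0 0 := by
  rw [Matrix.fromBlocks_add]; simp

lemma dg_smul (c : ℝ) (X : Matrix ι ι ℝ) :
    c • (Matrix.fromBlocks X 0 0 0 : Matrix (ι ⊕ κ) (ι ⊕ κ) ℝ) =
      Matrix.fromBlocks (c • X) 0 0 0 := by
  rw [Matrix.fromBlocks_smul]; simp

end Aux

/-- If `N` is a nilpotent MASA (MANS) of `o(K̃)` whose common kernel is the span of the
first `k₀` coordinate vectors, then `M = {E(diag(X,0), α) : X ∈ N, α ∈ W}` is a MASA
of `e(K)`, `K = diag(K̃, D)`. -/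
theorem stmt7 (k₀ μ r : ℕ) (hk₀ : 1 ≤ k₀)
    (K₀ : Matrix (Fin μ) (Fin μ) ℝ) (hs : K₀ᵀ = K₀) (hi : IsUnit K₀)
    (d : Fin r → ℝ) (hd : ∀ i, d i = 1 ∨ d i = -1)
    (N : Set (Matrix (Idx7 k₀ μ) (Idx7 k₀ μ) ℝ))
    (hN : IsMASA (oK (Ktil k₀ μ K₀)) N)
    (hnil : ∀ X ∈ N, IsNilpotent X)
    (hker : {v : Idx7 k₀ μ → ℝ | ∀ X ∈ N, X.mulVec v = 0} =
      {v | (∀ a : Fin μ, v (Sum.inr (Sum.inl a)) = 0) ∧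
           (∀ a : Fin k₀, v (Sum.inr (Sum.inr a)) = 0)}) :
    IsMASA (eK (Matrix.fromBlocks (Ktil k₀ μ K₀) 0 0 (Matrix.diagonal d)))
      {m | ∃ X ∈ N, ∃ α : Idx7 k₀ μ ⊕ Fin r → ℝ,
        ((∀ a : Fin μ, α (Sum.inl (Sum.inr (Sum.inl a))) = 0) ∧
         (∀ a : Fin k₀, α (Sum.inl (Sum.inr (Sum.inr a))) = 0)) ∧
        m = Emat (Matrix.fromBlocks X 0 0 0) α} := by
  obtain ⟨hNsub, hNab, hN0, hNadd, hNsmul, hNmax⟩ := hN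
  set Kt := Ktil k₀ μ K₀ with hKt
  have hkerF : ∀ v : Idx7 k₀ μ → ℝ, (∀ X ∈ N, X.mulVec v = 0) ↔
      ((∀ a : Fin μ, v (Sum.inr (Sum.inl a)) = 0) ∧
       (∀ a : Fin k₀, v (Sum.inr (Sum.inr a)) = 0)) := fun v => Set.ext_iff.mp hker v
  -- W is killed by all diag(X,0), X ∈ N
  have hWker : ∀ X ∈ N, ∀ α : Idx7 k₀ μ ⊕ Fin r → ℝ,
      ((∀ a : Fin μ, α (Sum.inl (Sum.inr (Sum.inl a))) = 0) ∧
       (∀ a : Fin k₀, α (Sum.inl (Sum.inr (Sum.inr a))) = 0)) →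
      (Matrix.fromBlocks X 0 0 0 : Matrix (Idx7 k₀ μ ⊕ Fin r) (Idx7 k₀ μ ⊕ Fin r) ℝ).mulVec α
        = 0 := by
    intro X hX α hα
    rw [dg_mulVec]
    have h1 : X.mulVec (α ∘ Sum.inl) = 0 :=
      (hkerF (α ∘ Sum.inl)).mpr ⟨hα.1, hα.2⟩ X hX
    funext i; cases i <;> simp [h1]
  -- K₀ mulVec injectivity
  have hK₀ : ∀ v : Fin μ → ℝ, K₀.mulVec v = 0 → v = 0 := by
    intro v hv
    have hdet : IsUnit K₀.det := (Matrix.isUnit_iff_isUnit_det K₀).mp hi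
    calc v = (K₀⁻¹ * K₀).mulVec v := by
            rw [Matrix.nonsing_inv_mul K₀ hdet, Matrix.one_mulVec]
      _ = K₀⁻¹.mulVec (K₀.mulVec v) := by rw [← Matrix.mulVec_mulVec]
      _ = 0 := by rw [hv, Matrix.mulVec_zero]
  refine ⟨?_, ?_, ?_, ?_, ?_, ?_⟩
  · -- M ⊆ eK K
    rintro m ⟨X, hX, α, hα, rfl⟩
    refine ⟨Matrix.fromBlocks X 0 0 0, ?_, α, rfl⟩
    have hXo : X * Kt + Kt * Xᵀ = 0 := hNsub hX
    show _ * _ + _ * _ = 0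
    rw [Matrix.fromBlocks_transpose, Matrix.fromBlocks_multiply, Matrix.fromBlocks_multiply]
    simp only [Matrix.mul_zero, Matrix.zero_mul, add_zero, zero_add,
      Matrix.transpose_zero]
    rw [Matrix.fromBlocks_add]
    simp [hXo]
  · -- abelian
    rintro m₁ ⟨X, hX, α, hα, rfl⟩ m₂ ⟨Y, hY, β, hβ, rfl⟩
    rw [Emat_mul, Emat_mul, dg_mul, dg_mul, hNab X hX Y hY,
      hWker X hX β hβ, hWker Y hY α hα]
  · -- zero
    exact ⟨0, hN0, 0, ⟨fun _ => rfl, fun _ => rfl⟩, by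
      rw [Matrix.fromBlocks_zero, Emat_zero]⟩
  · -- add
    rintro m₁ ⟨X, hX, α, hα, rfl⟩ m₂ ⟨Y, hY, β, hβ, rfl⟩
    refine ⟨X + Y, hNadd X hX Y hY, α + β, ⟨?_, ?_⟩, ?_⟩
    · intro a; simp [hα.1 a, hβ.1 a]
    · intro a; simp [hα.2 a, hβ.2 a]
    · rw [Emat_add, dg_add]
  · -- smul
    rintro c m ⟨X, hX, α, hα, rfl⟩
    refine ⟨c • X, hNsmul c X hX, c • α, ⟨?_, ?_⟩, ?_⟩
    · intro a; simp [hα.1 a]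
    · intro a; simp [hα.2 a]
    · rw [Emat_smul, dg_smul]
  · -- maximality
    rintro Y ⟨Z, hZoK, γ, rfl⟩ hcomm
    -- commuting with Emat (diag X) 0 for X ∈ N
    have hc : ∀ X ∈ N,
        Z * (Matrix.fromBlocks X 0 0 0 : Matrix (Idx7 k₀ μ ⊕ Fin r) (Idx7 k₀ μ ⊕ Fin r) ℝ)
          = Matrix.fromBlocks X 0 0 0 * Z ∧
        (Matrix.fromBlocks X 0 0 0 : Matrix (Idx7 k₀ μ ⊕ Fin r) (Idx7 k₀ μ ⊕ Fin r) ℝ).mulVec γ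
          = 0 := by
      intro X hX
      have h := hcomm (Emat (Matrix.fromBlocks X 0 0 0) 0)
        ⟨X, hX, 0, ⟨fun _ => rfl, fun _ => rfl⟩, rfl⟩
      rw [Emat_mul, Emat_mul] at h
      obtain ⟨h1, h2⟩ := Emat_inj h
      refine ⟨h1, ?_⟩
      rw [← h2, Matrix.mulVec_zero]
    -- γ is in W
    have hγ : (∀ a : Fin μ, γ (Sum.inl (Sum.inr (Sum.inl a))) = 0) ∧
        (∀ a : Fin k₀, γ (Sum.inl (Sum.inr (Sum.inr a))) = 0) := by
      refine (hkerF (γ ∘ Sum.inl)).mp ?_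
      intro X hX
      have h2 := (hc X hX).2
      rw [dg_mulVec] at h2
      funext i
      exact congrFun h2 (Sum.inl i)
    -- Z kills W
    have hZW : ∀ α : Idx7 k₀ μ ⊕ Fin r → ℝ,
        ((∀ a : Fin μ, α (Sum.inl (Sum.inr (Sum.inl a))) = 0) ∧
         (∀ a : Fin k₀, α (Sum.inl (Sum.inr (Sum.inr a))) = 0)) → Z.mulVec α = 0 := by
      intro α hα
      have h := hcomm (Emat (Matrix.fromBlocks 0 0 0 0) α) ⟨0, hN0, α, hα, rfl⟩
      rw [Emat_mul, Emat_mul] at h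
      obtain ⟨h1, h2⟩ := Emat_inj h
      rw [h2, dg_mulVec]
      funext i; cases i <;> simp
    -- right half of Z vanishes
    have hright : ∀ i j, Z i (Sum.inr j) = 0 := by
      intro i j
      have h := hZW (Pi.single (Sum.inr j) 1) ⟨fun a => by simp, fun a => by simp⟩
      have := congrFun h i
      simpa [Matrix.mulVec_single] using this
    -- lower-left block vanishes
    have hZ21 : ∀ j l, Z (Sum.inr j) (Sum.inl l) = 0 := by
      intro j
      have key : ∀ i : Idx7 k₀ μ, ∑ l, Kt i l * Z (Sum.inr j) (Sum.inl l) = 0 := by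
        intro i
        have h := congrFun (congrFun hZoK (Sum.inl i)) (Sum.inr j)
        simpa [Matrix.mul_apply, Matrix.fromBlocks, Fintype.sum_sum_type, hright,
          Matrix.add_apply] using h
      have hmid : ∀ b : Fin μ, Z (Sum.inr j) (Sum.inl (Sum.inr (Sum.inl b))) = 0 := by
        have h0 : K₀.mulVec (fun b => Z (Sum.inr j) (Sum.inl (Sum.inr (Sum.inl b)))) = 0 := by
          funext a
          have := key (Sum.inr (Sum.inl a))
          simpa [hKt, Ktil, Fintype.sum_sum_type, Matrix.mulVec, dotProduct] using this
        intro b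
        exact congrFun (hK₀ _ h0) b
      intro l
      match l with
      | Sum.inl a =>
        have := key (Sum.inr (Sum.inr a))
        simpa [hKt, Ktil, Fintype.sum_sum_type] using this
      | Sum.inr (Sum.inl a) => exact hmid a
      | Sum.inr (Sum.inr a) =>
        have := key (Sum.inl a)
        simpa [hKt, Ktil, Fintype.sum_sum_type] using this
    -- Z is block diagonal
    set Z₁₁ : Matrix (Idx7 k₀ μ) (Idx7 k₀ μ) ℝ :=
      Matrix.of fun i l => Z (Sum.inl i) (Sum.inl l) with hZ11
    have hZeq : Z = Matrix.fromBlocks Z₁₁ 0 0 0 := by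
      ext i l
      cases i with
      | inl i => cases l with
        | inl l => simp [Matrix.fromBlocks, hZ11]
        | inr l => simp [Matrix.fromBlocks, hright]
      | inr i => cases l with
        | inl l => simp [Matrix.fromBlocks, hZ21]
        | inr l => simp [Matrix.fromBlocks, hright]
    -- Z₁₁ ∈ oK Kt
    have hZ11oK : Z₁₁ ∈ oK Kt := by
      show Z₁₁ * Kt + Kt * Z₁₁ᵀ = 0
      have h := hZoK
      rw [hZeq] at h
      change _ * _ + _ * _ = 0 at h
      rw [Matrix.fromBlocks_transpose, Matrix.fromBlocks_multiply,
        Matrix.fromBlocks_multiply] at h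
      ext i l
      have := congrFun (congrFun h (Sum.inl i)) (Sum.inl l)
      simpa [Matrix.fromBlocks] using this
    -- Z₁₁ commutes with N
    have hZ11N : Z₁₁ ∈ N := by
      refine hNmax Z₁₁ hZ11oK ?_
      intro X hX
      have h := (hc X hX).1
      rw [hZeq, dg_mul, dg_mul] at h
      ext i l
      have := congrFun (congrFun h (Sum.inl i)) (Sum.inl l)
      simpa [Matrix.fromBlocks] using this
    exact ⟨Z₁₁, hZ11N, γ, hγ, by rw [hZeq]⟩
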